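/- In a relation algebra, if x and y are subidentity atoms and 0 ≠ b ≤ x;1;y, then x;b = b and b;y = b. -/
import Mathlib


/-- A relation algebra: a Boolean algebra with relative multiplication `comp`,
converse `conv`, and identity element `one'`, satisfying Tarski's axioms. -/
class RelationAlgebra (α : Type*) extends BooleanAlgebra α where
  comp : α → α → α
  conv : α → α
  one' : α
  comp_assoc : ∀ a b c : α, comp (comp a b) c = comp a (comp b c)
  comp_one' : ∀ a : α, comp a one' = a
  conv_conv : ∀ a : α, conv (conv a) = a
  comp_sup : ∀ a b c : α, comp (a ⊔ b) c = comp a c ⊔ comp b c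
  conv_sup : ∀ a b : α, conv (a ⊔ b) = conv a ⊔ conv b
  conv_comp : ∀ a b : α, conv (comp a b) = comp (conv b) (conv a)
  tarski : ∀ a b : α, comp (conv a) (comp a b)ᶜ ≤ bᶜ

open RelationAlgebra

section Lemmas
variable {α : Type*} [RelationAlgebra α]

lemma ra_comp_mono_left {a b : α} (h : a ≤ b) (c : α) : comp a c ≤ comp b c := by
  have h2 : comp (a ⊔ b) c = comp a c ⊔ comp b c := comp_sup a b c
  rw [sup_eq_right.mpr h] at h2
  exact h2 ▸ le_sup_left

lemma ra_conv_mono {a b : α} (h : a ≤ b) : conv a ≤ conv b := by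
  have h2 : conv (a ⊔ b) = conv a ⊔ conv b := conv_sup a b
  rw [sup_eq_right.mpr h] at h2
  exact h2 ▸ le_sup_left

lemma ra_conv_one'_comp (c : α) : comp (conv one') c = c := by
  rw [← conv_conv c, ← conv_comp, comp_one']

lemma ra_conv_one' : conv (one' : α) = one' :=
  (comp_one' (conv one')).symm.trans (ra_conv_one'_comp one')

lemma ra_one'_comp (b : α) : comp (one' : α) b = b := by
  rw [← ra_conv_one', ra_conv_one'_comp]

lemma ra_comp_sup_right (a b c : α) : comp a (b ⊔ c) = comp a b ⊔ comp a c := by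
  rw [← conv_conv (comp a (b ⊔ c)), conv_comp, conv_sup, comp_sup, conv_sup,
    ← conv_comp, ← conv_comp, conv_conv, conv_conv]

lemma ra_comp_mono_right (a : α) {b c : α} (h : b ≤ c) : comp a b ≤ comp a c := by
  have h2 : comp a (b ⊔ c) = comp a b ⊔ comp a c := ra_comp_sup_right a b c
  rw [sup_eq_right.mpr h] at h2
  exact h2 ▸ le_sup_left

lemma ra_tarski' (a c : α) : comp a (comp (conv a) c)ᶜ ≤ cᶜ := by
  have h := tarski (conv a) c
  rwa [conv_conv] at h

lemma ra_conv_inf (a b : α) : conv (a ⊓ b) = conv a ⊓ conv b := by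
  apply le_antisymm
  · exact le_inf (ra_conv_mono inf_le_left) (ra_conv_mono inf_le_right)
  · have h : conv (conv a ⊓ conv b) ≤ a ⊓ b :=
      le_inf ((ra_conv_mono inf_le_left).trans_eq (conv_conv a))
        ((ra_conv_mono inf_le_right).trans_eq (conv_conv b))
    have h2 := ra_conv_mono h
    rwa [conv_conv] at h2

lemma ra_conv_top : conv (⊤ : α) = ⊤ := by
  refine le_antisymm le_top ?_
  have h := ra_conv_mono (le_top (a := conv (⊤ : α)))
  rwa [conv_conv] at h

/-- Dedekind / modularity law. -/
lemma ra_dedekind (a b c : α) : comp a b ⊓ c ≤ comp a (b ⊓ comp (conv a) c) := by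
  set X := comp (conv a) c with hX
  have hb : b = (b ⊓ X) ⊔ (b ⊓ Xᶜ) := by
    rw [← inf_sup_left, sup_compl_eq_top, inf_top_eq]
  have h1 : comp a b = comp a (b ⊓ X) ⊔ comp a (b ⊓ Xᶜ) := by
    conv_lhs => rw [hb]
    rw [ra_comp_sup_right]
  have h2 : comp a (b ⊓ Xᶜ) ⊓ c ≤ ⊥ := by
    have : comp a (b ⊓ Xᶜ) ≤ cᶜ :=
      (ra_comp_mono_right a inf_le_right).trans (ra_tarski' a c)
    calc comp a (b ⊓ Xᶜ) ⊓ c ≤ cᶜ ⊓ c := inf_le_inf_right c this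
      _ = ⊥ := compl_inf_eq_bot
  calc comp a b ⊓ c
      = (comp a (b ⊓ X) ⊓ c) ⊔ (comp a (b ⊓ Xᶜ) ⊓ c) := by rw [h1, inf_sup_right]
    _ ≤ comp a (b ⊓ X) ⊔ ⊥ := sup_le_sup inf_le_left h2
    _ = comp a (b ⊓ X) := sup_bot_eq _
    _ = comp a (b ⊓ comp (conv a) c) := rfl

lemma ra_subid_comp {e : α} (h : e ≤ one') (a : α) : comp e a = a ⊓ comp e ⊤ := by
  have he : conv e ≤ one' := (ra_conv_mono h).trans_eq ra_conv_one'
  apply le_antisymm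
  · exact le_inf ((ra_comp_mono_left h a).trans_eq (ra_one'_comp a))
      (ra_comp_mono_right e le_top)
  · calc a ⊓ comp e ⊤ = comp e ⊤ ⊓ a := inf_comm ..
      _ ≤ comp e (⊤ ⊓ comp (conv e) a) := ra_dedekind e ⊤ a
      _ = comp e (comp (conv e) a) := by rw [top_inf_eq]
      _ ≤ comp e a := ra_comp_mono_right e
          ((ra_comp_mono_left he a).trans_eq (ra_one'_comp a))

lemma ra_comp_subid {e : α} (h : e ≤ one') (a : α) : comp a e = a ⊓ comp ⊤ e := by
  have he : conv e ≤ one' := (ra_conv_mono h).trans_eq ra_conv_one'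
  have key := ra_subid_comp he (conv a)
  calc comp a e = conv (conv (comp a e)) := (conv_conv _).symm
    _ = conv (comp (conv e) (conv a)) := by rw [conv_comp]
    _ = conv (conv a ⊓ comp (conv e) ⊤) := by rw [key]
    _ = a ⊓ conv (comp (conv e) ⊤) := by rw [ra_conv_inf, conv_conv]
    _ = a ⊓ comp ⊤ e := by rw [conv_comp, ra_conv_top, conv_conv]

end Lemmas

theorem stmt_13 {α : Type*} [RelationAlgebra α] (x y b : α)
    (hx : IsAtom x) (hx' : x ≤ one') (hy : IsAtom y) (hy' : y ≤ one')
    (hb0 : b ≠ ⊥) (hb : b ≤ comp (comp x ⊤) y) :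
    comp x b = b ∧ comp b y = b := by
  have hx1 : b ≤ comp x ⊤ :=
    hb.trans ((ra_comp_mono_right _ hy').trans_eq (comp_one' _))
  have hy1 : b ≤ comp ⊤ y := by
    refine hb.trans ?_
    rw [comp_assoc]
    exact (ra_comp_mono_left hx' _).trans_eq (ra_one'_comp _)
  constructor
  · rw [ra_subid_comp hx' b, inf_eq_left.mpr hx1]
  · rw [ra_comp_subid hy' b, inf_eq_left.mpr hy1]
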